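/- Let $w$ be a weight on $\mathbb{R}^n$ and $1 < p < \infty$. Then $w^{-1} \in A_p(w)$ (the weighted Muckenhoupt class with respect to the measure $w\,dx$) if and only if $w \in RH_{p'}$, where $p' = p/(p-1)$. -/

import Mathlib

open MeasureTheory Metric Set ENNReal

noncomputable section

abbrev Rn (n : ℕ) := EuclideanSpace ℝ (Fin n)

/-- The measure `w dx` on `ℝⁿ` given by a weight `w`. -/
def wMeas (n : ℕ) (w : Rn n → ℝ) : Measure (Rn n) :=
  volume.withDensity fun x => ENNReal.ofReal (w x)

/-- `u` belongs to the Muckenhoupt class `A_p` with respect to the measure `μ`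
(for `1 < p`), with constant `C`; note `1 - p' = -(p-1)⁻¹`. -/
def IsAp {n : ℕ} (μ : Measure (Rn n)) (u : Rn n → ℝ) (p C : ℝ) : Prop :=
  ∀ (x : Rn n) (ρ : ℝ), 0 < ρ →
    (⨍ y in ball x ρ, u y ∂μ) *
      (⨍ y in ball x ρ, u y ^ (-(p - 1)⁻¹) ∂μ) ^ (p - 1) ≤ C

/-- `u` belongs to the Muckenhoupt class `A_1` with respect to `μ`, with constant `C`. -/
def IsAone {n : ℕ} (μ : Measure (Rn n)) (u : Rn n → ℝ) (C : ℝ) : Prop :=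
  ∀ (x : Rn n) (ρ : ℝ), 0 < ρ →
    ∀ᵐ y ∂(μ.restrict (ball x ρ)), ⨍ z in ball x ρ, u z ∂μ ≤ C * u y

/-- `u ∈ A_p(μ)` with constant `C`, for `1 ≤ p`. -/
def IsMuck {n : ℕ} (μ : Measure (Rn n)) (u : Rn n → ℝ) (p C : ℝ) : Prop :=
  (p = 1 ∧ IsAone μ u C) ∨ (1 < p ∧ IsAp μ u p C)

/-- `u` belongs to the reverse Hölder class `RH_s` with respect to `μ`
(for `1 < s < ∞`), with constant `C`. -/
def IsRH {n : ℕ} (μ : Measure (Rn n)) (u : Rn n → ℝ) (s C : ℝ) : Prop :=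
  ∀ (x : Rn n) (ρ : ℝ), 0 < ρ →
    (⨍ y in ball x ρ, u y ^ s ∂μ) ^ s⁻¹ ≤ C * ⨍ y in ball x ρ, u y ∂μ

/-- `r_u(μ) = inf { p : u ∈ A_p(μ) }`. -/
def rIndex (n : ℕ) (μ : Measure (Rn n)) (u : Rn n → ℝ) : ℝ :=
  sInf {p : ℝ | ∃ C, IsMuck μ u p C}

/-- `s_u(μ) = inf { q : u ∈ RH_{q'}(μ) }`. -/
def sIndex (n : ℕ) (μ : Measure (Rn n)) (u : Rn n → ℝ) : ℝ :=
  sInf {q : ℝ | 1 ≤ q ∧ ∃ C, IsRH μ u (q / (q - 1)) C}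

end

section Aux

open MeasureTheory Metric Set ENNReal

lemma core_iff2 (p v a t C : ℝ) (hp : 1 < p) (hv : 0 < v) (ha : 0 < a) (ht : 0 < t) :
    (t⁻¹ * v) * (t⁻¹ * a) ^ (p - 1) ≤ C ↔ v * a ^ (p - 1) ≤ C * t ^ p := by
  have ht2 : t ^ p = t * t ^ (p - 1) := by
    rw [show p = 1 + (p - 1) by ring, Real.rpow_add ht, Real.rpow_one]; ring_nf
  rw [Real.mul_rpow (inv_nonneg.2 ht.le) ha.le, Real.inv_rpow ht.le]
  rw [show t⁻¹ * v * ((t ^ (p - 1))⁻¹ * a ^ (p - 1)) = v * a ^ (p - 1) / (t * t ^ (p - 1)) by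
    ring]
  rw [div_le_iff₀ (by positivity), ← ht2]

lemma core_iff (p v a t D : ℝ) (hp : 1 < p) (hv : 0 < v) (ha : 0 < a) (ht : 0 < t)
    (hD : 0 < D) :
    (v⁻¹ * a) ^ (p / (p - 1))⁻¹ ≤ D * (v⁻¹ * t) ↔ v * a ^ (p - 1) ≤ D ^ p * t ^ p := by
  have hp0 : (0:ℝ) < p := by linarith
  have hq : (p / (p - 1))⁻¹ = (p - 1) / p := by rw [inv_div]
  have hvp : v ^ p = v ^ (p - 1) * v := by
    rw [show p = (p - 1) + 1 by ring, Real.rpow_add hv, Real.rpow_one]; ring_nf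
  rw [hq, ← Real.rpow_le_rpow_iff (z := p) (by positivity) (by positivity) hp0,
    ← Real.rpow_mul (by positivity), div_mul_cancel₀ _ hp0.ne',
    Real.mul_rpow hD.le (by positivity), Real.mul_rpow (inv_nonneg.2 hv.le) ht.le,
    Real.mul_rpow (inv_nonneg.2 hv.le) ha.le, Real.inv_rpow hv.le, Real.inv_rpow hv.le,
    inv_mul_eq_div, div_le_iff₀ (by positivity)]
  rw [show D ^ p * ((v ^ p)⁻¹ * t ^ p) * v ^ (p - 1) = D ^ p * t ^ p * (v ^ (p-1) / v ^ p) by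
    ring, hvp]
  rw [show v ^ (p - 1) / (v ^ (p - 1) * v) = v⁻¹ * (v ^ (p-1) / v ^ (p-1)) by ring,
    div_self (by positivity), mul_one]
  constructor
  · intro h
    calc v * a ^ (p-1) = a ^ (p-1) * v := by ring
    _ ≤ D ^ p * t ^ p * v⁻¹ * v := by
        have := mul_le_mul_of_nonneg_right h hv.le
        linarith [this]
    _ = D ^ p * t ^ p := by field_simp
  · intro h
    have : a ^ (p - 1) * v ≤ D ^ p * t ^ p := by linarith [h]
    calc a ^ (p-1) = (a ^ (p-1) * v) * v⁻¹ := by field_simp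
    _ ≤ (D ^ p * t ^ p) * v⁻¹ := by
        apply mul_le_mul_of_nonneg_right this (inv_nonneg.2 hv.le)
    _ = D ^ p * t ^ p * v⁻¹ := rfl

lemma key_fwd (p v a t C : ℝ) (hp : 1 < p) (hv : 0 < v) (ha : 0 ≤ a) (ht : 0 ≤ t)
    (h0 : t = 0 → a = 0) (H : (t⁻¹ * v) * (t⁻¹ * a) ^ (p - 1) ≤ C) :
    (v⁻¹ * a) ^ (p / (p - 1))⁻¹ ≤ (max C 0) ^ p⁻¹ * (v⁻¹ * t) := by
  have hp0 : (0:ℝ) < p := by linarith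
  have hq0 : (0:ℝ) < (p / (p - 1))⁻¹ := inv_pos.2 (div_pos hp0 (by linarith))
  rcases eq_or_lt_of_le ht with ht0 | ht
  · rw [← ht0]
    rw [h0 ht0.symm]
    rw [mul_zero, mul_zero, Real.zero_rpow hq0.ne']
  rcases eq_or_lt_of_le ha with ha0 | ha
  · rw [← ha0, mul_zero, Real.zero_rpow hq0.ne']
    positivity
  have hC : 0 < C := lt_of_lt_of_le (by positivity) H
  rw [max_eq_left hC.le]
  rw [core_iff p v a t _ hp hv ha ht (by positivity)]
  rw [Real.rpow_inv_rpow hC.le hp0.ne']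
  exact (core_iff2 p v a t C hp hv ha ht).mp H

lemma key_bwd (p v a t C : ℝ) (hp : 1 < p) (hv : 0 < v) (ha : 0 ≤ a) (ht : 0 ≤ t)
    (H : (v⁻¹ * a) ^ (p / (p - 1))⁻¹ ≤ C * (v⁻¹ * t)) :
    (t⁻¹ * v) * (t⁻¹ * a) ^ (p - 1) ≤ (max C 0) ^ p := by
  have hp0 : (0:ℝ) < p := by linarith
  have hp1 : (0:ℝ) < p - 1 := by linarith
  rcases eq_or_lt_of_le ht with ht0 | ht
  · rw [← ht0]
    norm_num [Real.zero_rpow hp1.ne']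
    positivity
  rcases eq_or_lt_of_le ha with ha0 | ha
  · rw [← ha0, mul_zero, Real.zero_rpow hp1.ne', mul_zero]
    positivity
  have hC : 0 < C := by
    have h1 : (0:ℝ) < (v⁻¹ * a) ^ (p / (p - 1))⁻¹ :=
      Real.rpow_pos_of_pos (by positivity) _
    nlinarith [mul_pos (inv_pos.2 hv) ht]
  rw [max_eq_left hC.le]
  rw [core_iff2 p v a t _ hp hv ha ht]
  exact (core_iff p v a t C hp hv ha ht hC).mp H

variable {n : ℕ}

lemma integral_wMeas (w : Rn n → ℝ) (hwm : Measurable w) (hw0 : ∀ x, 0 < w x)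
    {s : Set (Rn n)} (hs : MeasurableSet s) (g : Rn n → ℝ) :
    ∫ y in s, g y ∂(wMeas n w) = ∫ y in s, w y * g y := by
  rw [show wMeas n w
      = volume.withDensity (fun x => ((fun x => (w x).toNNReal) x : ℝ≥0∞)) from rfl,
    restrict_withDensity hs,
    integral_withDensity_eq_integral_smul
      (show Measurable (fun x : Rn n => (w x).toNNReal) from measurable_real_toNNReal.comp hwm)]
  refine integral_congr_ae (Filter.Eventually.of_forall fun y => ?_)
  simp [NNReal.smul_def, Real.coe_toNNReal _ (hw0 y).le]

lemma wMeas_apply (w : Rn n → ℝ) {s : Set (Rn n)} (hs : MeasurableSet s) :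
    wMeas n w s = ∫⁻ y in s, ENNReal.ofReal (w y) ∂volume :=
  withDensity_apply _ hs

lemma integral_w_eq (w : Rn n → ℝ) (hwm : Measurable w) (hw0 : ∀ x, 0 < w x)
    {s : Set (Rn n)} (hs : MeasurableSet s) :
    ∫ y in s, w y ∂volume = (wMeas n w s).toReal := by
  rw [integral_eq_lintegral_of_nonneg_ae
    (Filter.Eventually.of_forall fun y => (hw0 y).le) hwm.aestronglyMeasurable,
    wMeas_apply w hs]

lemma wMeas_ball_ne_zero (w : Rn n → ℝ) (hwm : Measurable w) (hw0 : ∀ x, 0 < w x)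
    (x : Rn n) (ρ : ℝ) (hρ : 0 < ρ) : wMeas n w (ball x ρ) ≠ 0 := by
  intro h
  rw [wMeas, withDensity_apply_eq_zero (hwm.ennreal_ofReal)] at h
  have he : {z : Rn n | ENNReal.ofReal (w z) ≠ 0} = univ := by
    ext z
    simp [ENNReal.ofReal_eq_zero, not_le, hw0 z]
  rw [he, univ_inter] at h
  exact (measure_ball_pos volume x hρ).ne' h

lemma self_le_one_add_rpow {c q : ℝ} (hc : 0 ≤ c) (hq : 1 ≤ q) : c ≤ 1 + c ^ q := by
  rcases le_total c 1 with h | h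
  · have : (0:ℝ) ≤ c ^ q := Real.rpow_nonneg hc q
    linarith
  · have h1 : c ^ (1:ℝ) ≤ c ^ q := Real.rpow_le_rpow_of_exponent_le h hq
    rw [Real.rpow_one] at h1
    linarith

lemma integral_rpow_eq_zero (w : Rn n → ℝ) (hwm : Measurable w) (hw0 : ∀ x, 0 < w x)
    {q : ℝ} (hq : 1 ≤ q) (x : Rn n) (ρ : ℝ)
    (htop : wMeas n w (ball x ρ) = ∞) :
    ∫ y in ball x ρ, w y ^ q ∂volume = 0 := by
  by_cases hInt : IntegrableOn (fun y => w y ^ q) (ball x ρ) volume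
  · exfalso
    have h1 : IntegrableOn (fun _ : Rn n => (1:ℝ)) (ball x ρ) volume :=
      integrableOn_const measure_ball_lt_top.ne (by simp)
    have hwInt : IntegrableOn w (ball x ρ) volume := by
      refine Integrable.mono' (h1.add hInt) hwm.aestronglyMeasurable.restrict
        (Filter.Eventually.of_forall fun y => ?_)
      rw [Real.norm_of_nonneg (hw0 y).le]
      exact self_le_one_add_rpow (hw0 y).le hq
    have hfin : (∫⁻ y in ball x ρ, (‖w y‖₊ : ℝ≥0∞) ∂volume) < ∞ :=
      hwInt.hasFiniteIntegral
    have : wMeas n w (ball x ρ) < ∞ := by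
      rw [wMeas_apply w measurableSet_ball]
      refine lt_of_eq_of_lt ?_ hfin
      refine lintegral_congr fun y => ?_
      rw [← Real.enorm_eq_ofReal (hw0 y).le]
      rfl
    exact this.ne htop
  · exact integral_undef hInt

lemma bridge (n : ℕ) (p : ℝ) (hp : 1 < p) (w : Rn n → ℝ)
    (hw0 : ∀ x, 0 < w x) (hwm : Measurable w) (x : Rn n) (ρ : ℝ) (hρ : 0 < ρ) :
    (⨍ y in ball x ρ, (w y)⁻¹ ∂(wMeas n w))
        = ((wMeas n w) (ball x ρ)).toReal⁻¹ * (volume (ball x ρ)).toReal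
    ∧ (⨍ y in ball x ρ, ((w y)⁻¹) ^ (-(p - 1)⁻¹) ∂(wMeas n w))
        = ((wMeas n w) (ball x ρ)).toReal⁻¹ * ∫ y in ball x ρ, w y ^ (p / (p - 1)) ∂volume
    ∧ (⨍ y in ball x ρ, w y ^ (p / (p - 1)) ∂volume)
        = ((volume : Measure (Rn n)) (ball x ρ)).toReal⁻¹
            * ∫ y in ball x ρ, w y ^ (p / (p - 1)) ∂volume
    ∧ (⨍ y in ball x ρ, w y ∂volume)
        = ((volume : Measure (Rn n)) (ball x ρ)).toReal⁻¹ * ((wMeas n w) (ball x ρ)).toReal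
    ∧ 0 < ((volume : Measure (Rn n)) (ball x ρ)).toReal
    ∧ 0 ≤ ((wMeas n w) (ball x ρ)).toReal
    ∧ 0 ≤ ∫ y in ball x ρ, w y ^ (p / (p - 1)) ∂volume
    ∧ (((wMeas n w) (ball x ρ)).toReal = 0 →
        ∫ y in ball x ρ, w y ^ (p / (p - 1)) ∂volume = 0) := by
  have hp1 : (0:ℝ) < p - 1 := by linarith
  have hq1 : 1 ≤ p / (p - 1) := le_of_lt ((one_lt_div hp1).2 (by linarith))
  refine ⟨?_, ?_, ?_, ?_, ?_, ENNReal.toReal_nonneg, ?_, ?_⟩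
  · rw [setAverage_eq, integral_wMeas w hwm hw0 measurableSet_ball, smul_eq_mul]
    congr 1
    have h1 : ∀ y : Rn n, w y * (w y)⁻¹ = 1 := fun y => mul_inv_cancel₀ (hw0 y).ne'
    simp only [h1]
    rw [setIntegral_const, smul_eq_mul, mul_one]
    rfl
  · rw [setAverage_eq, integral_wMeas w hwm hw0 measurableSet_ball, smul_eq_mul]
    congr 1
    refine setIntegral_congr_fun measurableSet_ball fun y _ => ?_
    have hc : 0 < w y := hw0 y
    have e1 : ((w y)⁻¹ : ℝ) ^ (-(p - 1)⁻¹) = (w y) ^ ((p - 1)⁻¹) := by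
      rw [Real.rpow_neg (inv_nonneg.2 hc.le), Real.inv_rpow hc.le, inv_inv]
    have he : (0:ℝ) < 1 + (p - 1)⁻¹ := by
      have : (0:ℝ) < (p - 1)⁻¹ := inv_pos.2 hp1
      linarith
    rw [e1, ← Real.rpow_one_add' hc.le he.ne']
    congr 1
    field_simp
    ring
  · rw [setAverage_eq, smul_eq_mul]
    rfl
  · rw [setAverage_eq, smul_eq_mul, integral_w_eq w hwm hw0 measurableSet_ball]
    rfl
  · exact ENNReal.toReal_pos (measure_ball_pos volume x hρ).ne' measure_ball_lt_top.ne
  · exact setIntegral_nonneg measurableSet_ball fun y _ => Real.rpow_nonneg (hw0 y).le _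
  · intro h0
    have htop : wMeas n w (ball x ρ) = ∞ := by
      rcases ENNReal.toReal_eq_zero_iff _ |>.1 h0 with h | h
      · exact absurd h (wMeas_ball_ne_zero w hwm hw0 x ρ hρ)
      · exact h
    exact integral_rpow_eq_zero w hwm hw0 hq1 x ρ htop

end Aux

/-- `w⁻¹ ∈ A_p(w)` if and only if `w ∈ RH_{p'}`, `p' = p/(p-1)`. -/
theorem inv_in_Ap_iff_RH (n : ℕ) (p : ℝ) (hp : 1 < p)
    (w : Rn n → ℝ) (hw0 : ∀ x, 0 < w x) (hwm : Measurable w) :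
    (∃ C, IsAp (wMeas n w) (fun x => (w x)⁻¹) p C) ↔
      (∃ C, IsRH (volume : Measure (Rn n)) w (p / (p - 1)) C) := by
  constructor
  · rintro ⟨C, hC⟩
    refine ⟨(max C 0) ^ p⁻¹, fun x ρ hρ => ?_⟩
    obtain ⟨e1, e2, e3, e4, hv, ht, ha, h0⟩ := bridge n p hp w hw0 hwm x ρ hρ
    have h := hC x ρ hρ
    simp only [e1, e2] at h
    simp only [e3, e4]
    exact key_fwd p _ _ _ C hp hv ha ht h0 h
  · rintro ⟨C, hC⟩
    refine ⟨(max C 0) ^ p, fun x ρ hρ => ?_⟩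
    obtain ⟨e1, e2, e3, e4, hv, ht, ha, h0⟩ := bridge n p hp w hw0 hwm x ρ hρ
    have h := hC x ρ hρ
    simp only [e3, e4] at h
    simp only [e1, e2]
    exact key_bwd p _ _ _ C hp hv ha ht h
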